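/- Let L(x) = (1/2) Σ_{(i,j)∈E} N_{ij} (s_i s_j − x_i x_j)^2 with N symmetric nonnegative and s ∈ [κ, K]^W, 0 < κ ≤ K. Then for all y, z ∈ [0, K^2/κ]^W, ‖∇L(y) − ∇L(z)‖_2 ≤ L̂ ‖y − z‖_2 with L̂ = 4 W ‖N‖_F K^4/κ^2. -/

import Mathlib

/-- The gradient `∇L(x)_i = Σ_j N_{ij}(x_i x_j − s_i s_j) x_j` of the weighted rank-one
loss is Lipschitz on `[0, K²/κ]^W` with constant `L̂ = 4 W ‖N‖_F K⁴/κ²`. -/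
theorem stmt12 (W : ℕ) (N : Matrix (Fin W) (Fin W) ℝ)
    (hsymm : ∀ i j, N i j = N j i) (hnonneg : ∀ i j, 0 ≤ N i j)
    (κ K : ℝ) (hκ : 0 < κ) (hκK : κ ≤ K)
    (s : Fin W → ℝ) (hs : ∀ i, s i ∈ Set.Icc κ K)
    (y z : Fin W → ℝ)
    (hy : ∀ i, y i ∈ Set.Icc (0 : ℝ) (K ^ 2 / κ))
    (hz : ∀ i, z i ∈ Set.Icc (0 : ℝ) (K ^ 2 / κ)) :
    Real.sqrt (∑ i, ((∑ j, N i j * (y i * y j - s i * s j) * y j)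
        - (∑ j, N i j * (z i * z j - s i * s j) * z j)) ^ 2)
      ≤ (4 * W * Real.sqrt (∑ i, ∑ j, (N i j) ^ 2) * K ^ 4 / κ ^ 2) *
        Real.sqrt (∑ i, (y i - z i) ^ 2) := by
  have hK : 0 < K := lt_of_lt_of_le hκ hκK
  set D := Real.sqrt (∑ i, (y i - z i) ^ 2) with hDdef
  set F := Real.sqrt (∑ i, ∑ j, (N i j) ^ 2) with hFdef
  set B : ℝ := K ^ 2 / κ with hBdef
  have hBpos : 0 < B := by positivity
  have hD0 : 0 ≤ D := Real.sqrt_nonneg _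
  have hF0 : 0 ≤ F := Real.sqrt_nonneg _
  have hKB : K ≤ B := by
    rw [hBdef, le_div_iff₀ hκ]; nlinarith
  have hdD : ∀ i, |y i - z i| ≤ D := by
    intro i
    rw [hDdef, ← Real.sqrt_sq_eq_abs]
    exact Real.sqrt_le_sqrt
      (Finset.single_le_sum (f := fun k => (y k - z k) ^ 2)
        (fun j _ => sq_nonneg _) (Finset.mem_univ i))
  have hyB : ∀ i, |y i| ≤ B := fun i =>
    abs_le.mpr ⟨by linarith [(hy i).1, hBpos.le], (hy i).2⟩
  have hzB : ∀ i, |z i| ≤ B := fun i =>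
    abs_le.mpr ⟨by linarith [(hz i).1, hBpos.le], (hz i).2⟩
  have hsK : ∀ i, |s i| ≤ K := fun i =>
    abs_le.mpr ⟨by linarith [(hs i).1], (hs i).2⟩
  -- per-term bound
  have hterm : ∀ i j,
      |N i j * (y i * y j - s i * s j) * y j - N i j * (z i * z j - s i * s j) * z j|
        ≤ N i j * (4 * B ^ 2 * D) := by
    intro i j
    have hre : N i j * (y i * y j - s i * s j) * y j - N i j * (z i * z j - s i * s j) * z j
        = N i j * ((y i - z i) * y j ^ 2 + (z i * (y j + z j) - s i * s j) * (y j - z j)) := by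
      ring
    rw [hre, abs_mul, abs_of_nonneg (hnonneg i j)]
    have h1 : |(y i - z i) * y j ^ 2| ≤ D * B ^ 2 := by
      rw [abs_mul, abs_pow]
      exact mul_le_mul (hdD i) (pow_le_pow_left₀ (abs_nonneg _) (hyB j) 2)
        (by positivity) hD0
    have h2 : |(z i * (y j + z j) - s i * s j) * (y j - z j)| ≤ 3 * B ^ 2 * D := by
      rw [abs_mul]
      have hmid : |z i * (y j + z j) - s i * s j| ≤ 3 * B ^ 2 := by
        have h3 : |z i * (y j + z j) - s i * s j|
            ≤ |z i * (y j + z j)| + |s i * s j| := abs_sub _ _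
        have h4 : |z i * (y j + z j)| ≤ B * (B + B) := by
          rw [abs_mul]
          have := (abs_add_le (y j) (z j)).trans (add_le_add (hyB j) (hzB j))
          have := hzB i
          have := abs_nonneg (z i)
          have := abs_nonneg (y j + z j)
          nlinarith
        have h5 : |s i * s j| ≤ K * K := by
          rw [abs_mul]
          have := hsK i; have := hsK j
          have := abs_nonneg (s i); have := abs_nonneg (s j)
          nlinarith
        nlinarith
      have := hdD j
      have := abs_nonneg (z i * (y j + z j) - s i * s j)
      have := abs_nonneg (y j - z j)
      nlinarith
    have habs : |(y i - z i) * y j ^ 2 + (z i * (y j + z j) - s i * s j) * (y j - z j)|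
        ≤ 4 * B ^ 2 * D := by
      calc |(y i - z i) * y j ^ 2 + (z i * (y j + z j) - s i * s j) * (y j - z j)|
          ≤ |(y i - z i) * y j ^ 2| + |(z i * (y j + z j) - s i * s j) * (y j - z j)| :=
            abs_add_le _ _
        _ ≤ 4 * B ^ 2 * D := by nlinarith
    exact mul_le_mul_of_nonneg_left habs (hnonneg i j)
  -- per-row bound
  have hrow : ∀ i,
      |(∑ j, N i j * (y i * y j - s i * s j) * y j)
        - (∑ j, N i j * (z i * z j - s i * s j) * z j)|
      ≤ (∑ j, N i j) * (4 * B ^ 2 * D) := by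
    intro i
    rw [← Finset.sum_sub_distrib, Finset.sum_mul]
    exact (Finset.abs_sum_le_sum_abs _ _).trans
      (Finset.sum_le_sum fun j _ => hterm i j)
  set C : ℝ := 4 * ↑W * F * K ^ 4 / κ ^ 2 with hCdef
  have hC0 : 0 ≤ C := by positivity
  clear_value D F B C
  have hsum : (∑ i, ((∑ j, N i j * (y i * y j - s i * s j) * y j)
      - (∑ j, N i j * (z i * z j - s i * s j) * z j)) ^ 2) ≤ (C * D) ^ 2 := by
    have hstep : (∑ i, ((∑ j, N i j * (y i * y j - s i * s j) * y j)
        - (∑ j, N i j * (z i * z j - s i * s j) * z j)) ^ 2)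
        ≤ ∑ i : Fin W, ((∑ j, N i j) * (4 * B ^ 2 * D)) ^ 2 := by
      apply Finset.sum_le_sum
      intro i _
      have h := hrow i
      calc ((∑ j, N i j * (y i * y j - s i * s j) * y j)
            - (∑ j, N i j * (z i * z j - s i * s j) * z j)) ^ 2
          = |(∑ j, N i j * (y i * y j - s i * s j) * y j)
            - (∑ j, N i j * (z i * z j - s i * s j) * z j)| ^ 2 := (sq_abs _).symm
        _ ≤ ((∑ j, N i j) * (4 * B ^ 2 * D)) ^ 2 :=
            pow_le_pow_left₀ (abs_nonneg _) h 2
    have hCS : ∀ i : Fin W, (∑ j, N i j) ^ 2 ≤ (W : ℝ) * ∑ j, N i j ^ 2 := by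
      intro i
      have := sq_sum_le_card_mul_sum_sq (s := (Finset.univ : Finset (Fin W))) (f := fun j => N i j)
      simpa using this
    have hF2 : F ^ 2 = ∑ i, ∑ j, (N i j) ^ 2 := by
      rw [hFdef, Real.sq_sqrt]
      positivity
    have hD2 : D ^ 2 = ∑ i, (y i - z i) ^ 2 := by
      rw [hDdef, Real.sq_sqrt]
      positivity
    have hWW : (W : ℝ) ≤ (W : ℝ) ^ 2 := by
      have : W ≤ W ^ 2 := Nat.le_self_pow two_ne_zero W
      exact_mod_cast this
    have hstep2 : (∑ i : Fin W, ((∑ j, N i j) * (4 * B ^ 2 * D)) ^ 2)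
        ≤ (W : ℝ) * (∑ i, ∑ j, (N i j) ^ 2) * (4 * B ^ 2 * D) ^ 2 := by
      calc (∑ i : Fin W, ((∑ j, N i j) * (4 * B ^ 2 * D)) ^ 2)
          = (∑ i : Fin W, (∑ j, N i j) ^ 2) * (4 * B ^ 2 * D) ^ 2 := by
            simp_rw [mul_pow]; rw [← Finset.sum_mul]
        _ ≤ ((W : ℝ) * ∑ i, ∑ j, (N i j) ^ 2) * (4 * B ^ 2 * D) ^ 2 := by
            apply mul_le_mul_of_nonneg_right _ (sq_nonneg _)
            rw [Finset.mul_sum]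
            exact Finset.sum_le_sum fun i _ => hCS i
        _ = (W : ℝ) * (∑ i, ∑ j, (N i j) ^ 2) * (4 * B ^ 2 * D) ^ 2 := by ring
    have hCD : (C * D) ^ 2 = (W : ℝ) ^ 2 * (∑ i, ∑ j, (N i j) ^ 2) * (4 * B ^ 2 * D) ^ 2 := by
      rw [hCdef, hBdef]
      rw [← hF2]
      field_simp
    have hSN : (0 : ℝ) ≤ ∑ i, ∑ j, (N i j) ^ 2 := by positivity
    calc (∑ i, ((∑ j, N i j * (y i * y j - s i * s j) * y j)
          - (∑ j, N i j * (z i * z j - s i * s j) * z j)) ^ 2)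
        ≤ (W : ℝ) * (∑ i, ∑ j, (N i j) ^ 2) * (4 * B ^ 2 * D) ^ 2 :=
          hstep.trans hstep2
      _ ≤ (W : ℝ) ^ 2 * (∑ i, ∑ j, (N i j) ^ 2) * (4 * B ^ 2 * D) ^ 2 := by
          apply mul_le_mul_of_nonneg_right _ (sq_nonneg _)
          exact mul_le_mul_of_nonneg_right hWW hSN
      _ = (C * D) ^ 2 := hCD.symm
  calc Real.sqrt (∑ i, ((∑ j, N i j * (y i * y j - s i * s j) * y j)
        - (∑ j, N i j * (z i * z j - s i * s j) * z j)) ^ 2)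
      ≤ Real.sqrt ((C * D) ^ 2) := Real.sqrt_le_sqrt hsum
    _ = C * D := Real.sqrt_sq (mul_nonneg hC0 hD0)
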